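/- Let r ≥ 1 and let (v_1,…,v_r) be a system of linear functionals on ℂ[x] whose moment matrix M admits a Gauss–Borel factorisation M = A·B, and let C be the (upper-triangular) inverse of B, i.e. Σ_{k=ℓ}^{n} B_{ℓ,k} C_{k,n} = δ_{ℓ,n}. Define, for each n ∈ ℕ and 1 ≤ j ≤ r, the polynomial C_{n,j}(x) := Σ_{m : rm+j−1 ≤ n} C_{rm+j−1, n} x^m, and the linear functional q_n := Σ_{j=1}^{r} C_{n,j}(x)·v_j (where for a polynomial p and functional v, p·v denotes f ↦ ⟨v, p f⟩). Then ⟨q_k, x^n⟩ = A_{n,k} for all n, k ∈ ℕ; in particular ⟨q_n, x^m⟩ = 0 for 0 ≤ m ≤ n−1 and ⟨q_n, x^n⟩ = 1, and for n = rm+k with 0 ≤ k ≤ r−1 one has deg C_{n,j} ≤ m for 1 ≤ j ≤ k+1 and deg C_{n,j} ≤ m−1 for k+2 ≤ j ≤ r, so (q_n) is the sequence of type I linear forms on the step-line with respect to (v_1,…,v_r). -/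

import Mathlib

open Polynomial Finset

noncomputable section

/-- A linear functional on `ℂ[x]`. -/
abbrev LF := Polynomial ℂ →ₗ[ℂ] ℂ

/-- The moment matrix of a system of `r` linear functionals (0-indexed:
`v j` is the paper's `v_{j+1}`): entry `(n, r*k+j)` is `⟨v_{j+1}, x^{k+n}⟩`. -/
def momentMatrix (r : ℕ) (v : ℕ → LF) (n ℓ : ℕ) : ℂ :=
  v (ℓ % r) (Polynomial.X ^ (ℓ / r + n))

/-- A Gauss–Borel factorisation `M = A·B` of the moment matrix. -/
structure GaussBorel (r : ℕ) (v : ℕ → LF) (A B : ℕ → ℕ → ℂ) : Prop where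
  A_diag : ∀ n, A n n = 1
  A_upper : ∀ n ℓ, n < ℓ → A n ℓ = 0
  B_lower : ∀ n ℓ, ℓ < n → B n ℓ = 0
  B_diag : ∀ n, B n n ≠ 0
  factor : ∀ n ℓ, momentMatrix r v n ℓ = ∑ k ∈ Finset.range (n + 1), A n k * B k ℓ

/-- The polynomial `C_{n,j+1}(x) = Σ_{m : r m + j ≤ n} C_{r m + j, n} x^m`
(0-indexed in `j`: this is the paper's `C_{n,j+1}`). -/
def Cpoly (r : ℕ) (Cm : ℕ → ℕ → ℂ) (n j : ℕ) : Polynomial ℂ :=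
  ∑ m ∈ (Finset.range (n + 1)).filter (fun m => r * m + j ≤ n),
    Polynomial.C (Cm (r * m + j) n) * Polynomial.X ^ m

theorem stmt1 (r : ℕ) (hr : 1 ≤ r) (v : ℕ → LF) (A B Cm : ℕ → ℕ → ℂ)
    (hGB : GaussBorel r v A B)
    (hCupper : ∀ k n, n < k → Cm k n = 0)
    (hCinv : ∀ ℓ n, ∑ k ∈ Finset.Icc ℓ n, B ℓ k * Cm k n = if ℓ = n then 1 else 0) :
    -- `⟨q_k, x^n⟩ = A_{n,k}` where `q_k := Σ_{j<r} C_{k,j+1}(x)·v_{j+1}`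
    (∀ n k, ∑ j ∈ Finset.range r, v j (Cpoly r Cm k j * Polynomial.X ^ n) = A n k) ∧
    -- in particular `⟨q_n, x^m⟩ = 0` for `m < n` and `⟨q_n, x^n⟩ = 1`
    (∀ n m, m < n → ∑ j ∈ Finset.range r, v j (Cpoly r Cm n j * Polynomial.X ^ m) = 0) ∧
    (∀ n, ∑ j ∈ Finset.range r, v j (Cpoly r Cm n j * Polynomial.X ^ n) = 1) ∧
    -- degree bounds: for `n = r m + k` with `k < r`, `deg C_{n,j+1} ≤ m` for `j ≤ k`
    -- and `deg C_{n,j+1} ≤ m − 1` for `k < j < r`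
    (∀ m k, k < r →
      (∀ j, j ≤ k → (Cpoly r Cm (r * m + k) j).degree ≤ (m : WithBot ℕ)) ∧
      (∀ j, k < j → j < r → (Cpoly r Cm (r * m + k) j).degree < (m : WithBot ℕ))) := by
  have hr0 : 0 < r := hr
  have key : ∀ n k, ∑ j ∈ Finset.range r, v j (Cpoly r Cm k j * Polynomial.X ^ n) = A n k := by
    intro n k
    have step1 : ∀ j ∈ Finset.range r, v j (Cpoly r Cm k j * Polynomial.X ^ n)
        = ∑ m ∈ (Finset.range (k+1)).filter (fun m => r * m + j ≤ k),
            Cm (r*m+j) k * momentMatrix r v n (r*m+j) := by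
      intro j hj
      rw [Finset.mem_range] at hj
      rw [Cpoly, Finset.sum_mul, map_sum]
      refine Finset.sum_congr rfl fun m hm => ?_
      have h1 : Polynomial.C (Cm (r*m+j) k) * Polynomial.X ^ m * Polynomial.X ^ n
          = Cm (r*m+j) k • (Polynomial.X ^ (m + n) : Polynomial ℂ) := by
        rw [Polynomial.smul_eq_C_mul, mul_assoc, pow_add]
      rw [h1, map_smul, smul_eq_mul]
      congr 1
      rw [momentMatrix, Nat.mul_add_mod, Nat.mod_eq_of_lt hj,
        Nat.mul_add_div hr0, Nat.div_eq_of_lt hj, add_zero]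
    rw [Finset.sum_congr rfl step1]
    have reindex : ∑ j ∈ Finset.range r,
        ∑ m ∈ (Finset.range (k+1)).filter (fun m => r * m + j ≤ k),
          Cm (r*m+j) k * momentMatrix r v n (r*m+j)
        = ∑ ℓ ∈ Finset.range (k+1), Cm ℓ k * momentMatrix r v n ℓ := by
      rw [Finset.sum_sigma']
      refine Finset.sum_nbij' (fun p => r * p.2 + p.1) (fun ℓ => ⟨ℓ % r, ℓ / r⟩)
        ?_ ?_ ?_ ?_ ?_
      · rintro ⟨j, m⟩ hp
        simp only [Finset.mem_sigma, Finset.mem_range, Finset.mem_filter] at hp ⊢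
        omega
      · intro ℓ hℓ
        simp only [Finset.mem_range] at hℓ
        simp only [Finset.mem_sigma, Finset.mem_range, Finset.mem_filter]
        have hd : r * (ℓ / r) + ℓ % r = ℓ := by
          rw [Nat.div_add_mod]
        have hd2 : ℓ / r ≤ ℓ := Nat.div_le_self ℓ r
        refine ⟨Nat.mod_lt _ hr0, ⟨?_, ?_⟩⟩ <;> omega
      · rintro ⟨j, m⟩ hp
        simp only [Finset.mem_sigma, Finset.mem_range, Finset.mem_filter] at hp
        have h1 : (r * m + j) % r = j := by
          rw [Nat.mul_add_mod, Nat.mod_eq_of_lt hp.1]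
        have h2 : (r * m + j) / r = m := by
          rw [Nat.mul_add_div hr0, Nat.div_eq_of_lt hp.1, add_zero]
        simp [h1, h2]
      · intro ℓ _
        exact Nat.div_add_mod ℓ r
      · rintro ⟨j, m⟩ hp
        rfl
    rw [reindex]
    have inner : ∀ i, ∑ ℓ ∈ Finset.range (k+1), B i ℓ * Cm ℓ k
        = if i = k then 1 else 0 := by
      intro i
      by_cases hik : i ≤ k
      · rw [← hCinv i k]
        refine (Finset.sum_subset ?_ ?_).symm
        · intro ℓ hℓ
          simp only [Finset.mem_Icc] at hℓ
          simp only [Finset.mem_range]; omega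
        · intro ℓ hℓ hℓ'
          simp only [Finset.mem_range] at hℓ
          simp only [Finset.mem_Icc, not_and, not_le] at hℓ'
          rw [hGB.B_lower i ℓ (by omega), zero_mul]
      · rw [if_neg (by omega)]
        refine Finset.sum_eq_zero fun ℓ hℓ => ?_
        simp only [Finset.mem_range] at hℓ
        rw [hGB.B_lower i ℓ (by omega), zero_mul]
    calc ∑ ℓ ∈ Finset.range (k+1), Cm ℓ k * momentMatrix r v n ℓ
        = ∑ ℓ ∈ Finset.range (k+1), ∑ i ∈ Finset.range (n+1),
            A n i * (B i ℓ * Cm ℓ k) := by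
          refine Finset.sum_congr rfl fun ℓ _ => ?_
          rw [hGB.factor n ℓ, Finset.mul_sum]
          exact Finset.sum_congr rfl fun i _ => by ring
      _ = ∑ i ∈ Finset.range (n+1), A n i *
            ∑ ℓ ∈ Finset.range (k+1), B i ℓ * Cm ℓ k := by
          rw [Finset.sum_comm]
          exact Finset.sum_congr rfl fun i _ => (Finset.mul_sum _ _ _).symm
      _ = ∑ i ∈ Finset.range (n+1), (if i = k then A n i else 0) := by
          refine Finset.sum_congr rfl fun i _ => ?_
          rw [inner i, mul_ite, mul_one, mul_zero]
      _ = A n k := by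
          rw [Finset.sum_ite_eq' (Finset.range (n+1)) k (A n)]
          by_cases hkn : k ∈ Finset.range (n+1)
          · rw [if_pos hkn]
          · rw [if_neg hkn, hGB.A_upper n k (by simpa using hkn)]
  refine ⟨key, fun n m h => (key m n).trans (hGB.A_upper m n h),
    fun n => (key n n).trans (hGB.A_diag n), ?_⟩
  intro m k hk
  constructor
  · intro j hj
    refine (Polynomial.degree_sum_le _ _).trans ?_
    rw [Finset.sup_le_iff]
    intro m' hm'
    simp only [Finset.mem_filter, Finset.mem_range] at hm'
    refine (Polynomial.degree_C_mul_X_pow_le _ _).trans ?_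
    have h2 : r * (m + 1) = r * m + r := by ring
    have : m' < m + 1 := Nat.lt_of_mul_lt_mul_left (a := r) (by omega)
    exact_mod_cast Nat.lt_succ_iff.mp this
  · intro j hkj hjr
    refine lt_of_le_of_lt (Polynomial.degree_sum_le _ _) ?_
    rw [Finset.sup_lt_iff (by exact_mod_cast WithBot.bot_lt_coe m)]
    intro m' hm'
    simp only [Finset.mem_filter, Finset.mem_range] at hm'
    refine lt_of_le_of_lt (Polynomial.degree_C_mul_X_pow_le _ _) ?_
    have : m' < m := Nat.lt_of_mul_lt_mul_left (a := r) (by omega)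
    exact_mod_cast this
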